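/- Let K be a commutative ring with unity and A a finite alphabet. Two words u, v ∈ A* are twin with respect to L_K(A) if and only if λ(u) = λ(v), and they are anti-twin if and only if λ(u) = −λ(v). -/

import Mathlib

open scoped BigOperators
open Classical

attribute [local instance 100] LieRing.ofAssociativeRing

noncomputable section

/-- The free associative algebra `K⟨A⟩` on the alphabet `A`, realized as the monoid algebra
of the free monoid on `A`. -/
abbrev NC (K A : Type*) [CommRing K] : Type _ := MonoidAlgebra K (FreeMonoid A)

variable (K A : Type*) [CommRing K]

/-- The monomial (word) `w` viewed as an element of `K⟨A⟩`. -/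
def wp (w : List A) : NC K A := MonoidAlgebra.single (FreeMonoid.ofList w) 1

/-- The coefficient `(P, w)` of the word `w` in the polynomial `P`. -/
def coeffW (P : NC K A) (w : List A) : K := P.coeff (FreeMonoid.ofList w)

/-- The canonical scalar product `(P, Q) = ∑_w (P, w)(Q, w)` on `K⟨A⟩`. -/
def sp (P Q : NC K A) : K := Finsupp.sum P.coeff fun w c => c * Q.coeff w

/-- The free Lie algebra `L_K(A)`: the Lie subalgebra of `K⟨A⟩` (with the commutator
bracket) generated by the letters. -/
def freeLie : LieSubalgebra K (NC K A) :=
  LieSubalgebra.lieSpan K (NC K A) (Set.range fun a : A => wp K A [a])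

/-- The adjoint `λ` of the left-normed Lie bracketing, on words:
`λ(ε) = 0`, `λ(a) = a`, `λ(aub) = λ(au)b − λ(ub)a`. -/
def lam : List A → NC K A
  | [] => 0
  | [a] => wp K A [a]
  | a :: b :: t =>
      lam (a :: (b :: t).dropLast) * wp K A [(b :: t).getLast (by simp)] -
        lam (b :: t) * wp K A [a]
  termination_by w => w.length
  decreasing_by
    all_goals simp [List.length_dropLast]

/-- `λ` extended linearly to the whole of `K⟨A⟩`. -/
def lamLin : NC K A →ₗ[K] NC K A :=
  (Finsupp.linearCombination K fun w : FreeMonoid A => lam K A (FreeMonoid.toList w)) ∘ₗ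
    (MonoidAlgebra.coeffLinearEquiv K).toLinearMap

/-- The shuffle product of two words, as an element of `K⟨A⟩`. -/
def shuffleW : List A → List A → NC K A
  | [], v => wp K A v
  | u, [] => wp K A u
  | a :: u, b :: v =>
      wp K A [a] * shuffleW u (b :: v) + wp K A [b] * shuffleW (a :: u) v
  termination_by u v => u.length + v.length
  decreasing_by
    all_goals simp [Nat.lt_succ_iff]

/-- The shuffle product on `K⟨A⟩`, extended bilinearly. -/
def sh (P Q : NC K A) : NC K A :=
  Finsupp.sum P.coeff fun u cu =>
    Finsupp.sum Q.coeff fun v cv =>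
      (cu * cv) • shuffleW K A (FreeMonoid.toList u) (FreeMonoid.toList v)

/-- The right residual `P ▷ q` of `P` by a word `q`: `(P ▷ q, w) = (P, qw)`. -/
def rresW (P : NC K A) (q : List A) : NC K A :=
  Finsupp.sum P.coeff fun u c =>
    if q <+: FreeMonoid.toList u then c • wp K A ((FreeMonoid.toList u).drop q.length) else 0

/-- The right residual `P ▷ Q`: `(P ▷ Q, w) = (P, Qw)`. -/
def rres (P Q : NC K A) : NC K A :=
  Finsupp.sum Q.coeff fun v c => c • rresW K A P (FreeMonoid.toList v)

/-- Auxiliary left residual by a word `q`: `(q ◁ P, w) = (P, wq)`. -/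
def lresW (P : NC K A) (q : List A) : NC K A :=
  Finsupp.sum P.coeff fun u c =>
    if q <:+ FreeMonoid.toList u then
      c • wp K A ((FreeMonoid.toList u).take ((FreeMonoid.toList u).length - q.length))
    else 0

/-- The left residual `Q ◁ P`: `(Q ◁ P, w) = (P, wQ)`. -/
def lres (Q P : NC K A) : NC K A :=
  Finsupp.sum Q.coeff fun v c => c • lresW K A P (FreeMonoid.toList v)

/-- The number of trailing occurrences of the letter `a` in the word `v`. -/
def trailCount (a : A) (v : FreeMonoid A) : ℕ :=
  ((FreeMonoid.toList v).reverse.takeWhile fun x => decide (x = a)).length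

/-- `d(P)`: the least number of trailing `a`'s among the words in the support of `P`. -/
def dP (a : A) (P : NC K A) : ℕ :=
  sInf {n : ℕ | ∃ v ∈ Finsupp.support P.coeff, trailCount A a v = n}

/-- `e(P)`: the largest number of trailing `a`'s among the words in the support of `P`. -/
def eP (a : A) (P : NC K A) : ℕ :=
  Finset.sup (Finsupp.support P.coeff) (trailCount A a)

/-- The polynomial `P_i` in the decomposition `P = ∑ P_i b a^i`: it collects (and strips
the suffix `b a^i` from) the monomials of `P` with exactly `i` trailing `a`'s. -/
def partBA (a b : A) (i : ℕ) (P : NC K A) : NC K A :=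
  Finsupp.sum P.coeff fun v c =>
    if (FreeMonoid.toList v).reverse.take (i + 1) = List.replicate i a ++ [b] then
      c • wp K A ((FreeMonoid.toList v).take ((FreeMonoid.toList v).length - (i + 1)))
    else 0

/-- A word is Lyndon if it is nonempty and strictly smaller, in the lexicographic order,
than each of its proper nonempty right factors. -/
def IsLyndon {A : Type*} [LinearOrder A] (w : List A) : Prop :=
  w ≠ [] ∧ ∀ s t : List A, w = t ++ s → t ≠ [] → s ≠ [] → List.Lex (· < ·) w s

/-- `γ(w)`: the nonnegative generator of the ideal `{(P, w) : P ∈ L_ℤ(A)}` of `ℤ`. -/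
def gammaW (A : Type*) (w : List A) : ℤ :=
  haveI : (Ideal.span {c : ℤ | ∃ P ∈ freeLie ℤ A, coeffW ℤ A P w = c}).IsPrincipal :=
    IsPrincipalIdealRing.principal _
  (Submodule.IsPrincipal.generator
    (Ideal.span {c : ℤ | ∃ P ∈ freeLie ℤ A, coeffW ℤ A P w = c})).natAbs

end

noncomputable section Aux

variable (K A : Type*) [CommRing K]

private lemma snoc_inj {A : Type*} {y w : List A} {d b : A}
    (h : y ++ [d] = w ++ [b]) : y = w ∧ d = b := by
  rw [← List.concat_eq_append, ← List.concat_eq_append] at h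
  exact List.concat_inj.mp h

private lemma eq_nil_or_snoc {A : Type*} (l : List A) :
    l = [] ∨ ∃ y d, l = y ++ [d] := by
  rcases l.eq_nil_or_concat with h | ⟨y, d, h⟩
  · exact Or.inl h
  · exact Or.inr ⟨y, d, by simpa [List.concat_eq_append] using h⟩

/-- The left-normed Lie bracketing `ℓ`. -/
def ell : List A → NC K A
  | [] => 0
  | a :: t => t.foldl (fun p b => p * wp K A [b] - wp K A [b] * p) (wp K A [a])

lemma ell_nil : ell K A ([] : List A) = 0 := rfl

lemma ell_single (a : A) : ell K A [a] = wp K A [a] := rfl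

lemma ell_snoc (a : A) (t : List A) (d : A) :
    ell K A ((a :: t) ++ [d]) =
      ell K A (a :: t) * wp K A [d] - wp K A [d] * ell K A (a :: t) := by
  show ell K A (a :: (t ++ [d])) = _
  simp [ell, List.foldl_append]

lemma coeffW_sub (P Q : NC K A) (w : List A) :
    coeffW K A (P - Q) w = coeffW K A P w - coeffW K A Q w :=
  Finsupp.sub_apply P.coeff Q.coeff _

lemma coeffW_add (P Q : NC K A) (w : List A) :
    coeffW K A (P + Q) w = coeffW K A P w + coeffW K A Q w :=
  Finsupp.add_apply P.coeff Q.coeff _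

lemma coeffW_smul (c : K) (P : NC K A) (w : List A) :
    coeffW K A (c • P) w = c * coeffW K A P w := by
  rw [coeffW, MonoidAlgebra.coeff_smul_apply, smul_eq_mul]; rfl

lemma coeffW_neg (P : NC K A) (w : List A) :
    coeffW K A (-P) w = - coeffW K A P w :=
  Finsupp.neg_apply P.coeff _

lemma coeffW_zero (w : List A) : coeffW K A (0 : NC K A) w = 0 := rfl

lemma coeff_wp (w x : List A) :
    coeffW K A (wp K A w) x = if w = x then 1 else 0 := by
  rw [coeffW, wp, MonoidAlgebra.single_apply]
  by_cases h : w = x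
  · subst h; rw [if_pos rfl, if_pos rfl]
  · rw [if_neg h, if_neg (fun hh => h (FreeMonoid.ofList.injective hh))]

lemma coeff_mul_letter (P : NC K A) (b : A) (w : List A) :
    coeffW K A (P * wp K A [b]) (w ++ [b]) = coeffW K A P w := by
  rw [coeffW, wp, MonoidAlgebra.mul_single_apply_aux (x := P)
    (m₂ := FreeMonoid.ofList w) ?_, mul_one]
  · rfl
  · intro a _
    constructor
    · intro h
      have h' : FreeMonoid.toList a ++ [b] = w ++ [b] := congrArg FreeMonoid.toList h
      have h2 : FreeMonoid.toList a = w := List.append_cancel_right h'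
      rw [← FreeMonoid.ofList_toList a, h2]
    · rintro rfl
      rfl

lemma coeff_mul_letter_ne (P : NC K A) (b : A) (w : List A)
    (h : ¬ ∃ w', w = w' ++ [b]) :
    coeffW K A (P * wp K A [b]) w = 0 := by
  rw [coeffW, wp]
  apply MonoidAlgebra.mul_single_apply_of_not_exists_mul
  rintro ⟨d, hd⟩
  exact h ⟨FreeMonoid.toList d, congrArg FreeMonoid.toList hd⟩

lemma coeff_letter_mul (P : NC K A) (b : A) (w : List A) :
    coeffW K A (wp K A [b] * P) (b :: w) = coeffW K A P w := by
  rw [coeffW, wp, MonoidAlgebra.single_mul_apply_aux (x := P)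
    (m₂ := FreeMonoid.ofList w) ?_, one_mul]
  · rfl
  · intro a _
    constructor
    · intro h
      have h' : b :: FreeMonoid.toList a = b :: w := congrArg FreeMonoid.toList h
      have h2 : FreeMonoid.toList a = w := by
        injection h'
      rw [← FreeMonoid.ofList_toList a, h2]
    · rintro rfl
      rfl

lemma coeff_letter_mul_ne (P : NC K A) (b : A) (w : List A)
    (h : ¬ ∃ w', w = b :: w') :
    coeffW K A (wp K A [b] * P) w = 0 := by
  rw [coeffW, wp]
  apply MonoidAlgebra.single_mul_apply_of_not_exists_mul
  rintro ⟨d, hd⟩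
  exact h ⟨FreeMonoid.toList d, congrArg FreeMonoid.toList hd⟩

lemma coeff_ell_nil (x : List A) : coeffW K A (ell K A x) [] = 0 := by
  rcases eq_nil_or_snoc x with rfl | ⟨y, d, rfl⟩
  · rfl
  · rcases y with _ | ⟨a, t⟩
    · simp [ell_single, coeff_wp]
    · rw [ell_snoc, coeffW_sub,
        coeff_mul_letter_ne K A _ _ _ (by rintro ⟨w', hw'⟩; simp at hw'),
        coeff_letter_mul_ne K A _ _ _ (by rintro ⟨w', hw'⟩; simp at hw'), sub_zero]

lemma lam_nil : lam K A ([] : List A) = 0 := by rw [lam]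

lemma lam_single (a : A) : lam K A [a] = wp K A [a] := by rw [lam]

lemma lam_eq (a : A) (m : List A) (c : A) :
    lam K A (a :: (m ++ [c])) =
      lam K A (a :: m) * wp K A [c] - lam K A (m ++ [c]) * wp K A [a] := by
  rcases m with _ | ⟨b, t⟩
  · show lam K A [a, c] = lam K A [a] * wp K A [c] - lam K A [c] * wp K A [a]
    conv_lhs => rw [lam]
    rfl
  · rw [show (b :: t) ++ [c] = b :: (t ++ [c]) from rfl, lam]
    have h1 : (b :: (t ++ [c])).dropLast = b :: t := by
      rw [show b :: (t ++ [c]) = (b :: t) ++ [c] from List.cons_append ..]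
      exact List.dropLast_concat
    have h2 : (b :: (t ++ [c])).getLast (by simp) = c := List.getLast_concat (l := b :: t)
    rw [h1, h2]

/-- Adjointness: `(λ(u), x) = (ℓ(x), u)`. -/
lemma adj_aux : ∀ (n : ℕ) (u : List A), u.length = n →
    ∀ x : List A, coeffW K A (lam K A u) x = coeffW K A (ell K A x) u := by
  intro n
  induction n with
  | zero =>
    intro u hu x
    rw [List.length_eq_zero_iff] at hu
    subst hu
    rw [lam_nil, coeffW_zero, coeff_ell_nil]
  | succ n ih =>
    intro u hu x
    rcases u with _ | ⟨a, r⟩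
    · simp at hu
    rcases eq_nil_or_snoc r with rfl | ⟨m, b, rfl⟩
    · -- u = [a]
      rw [lam_single]
      rcases eq_nil_or_snoc x with rfl | ⟨y, d, rfl⟩
      · simp [coeff_wp, ell_nil, coeffW_zero]
      · rcases y with _ | ⟨e, s⟩
        · rw [show ([] : List A) ++ [d] = [d] from rfl, ell_single, coeff_wp, coeff_wp]
          by_cases h : a = d
          · simp [h]
          · simp [h, Ne.symm h]
        · rw [ell_snoc, coeffW_sub, coeff_wp]
          have hne : ¬ ([a] = (e :: s) ++ [d]) := by simp
          rw [if_neg hne]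
          by_cases hd : d = a
          · subst hd
            have t1 : coeffW K A (ell K A (e :: s) * wp K A [d]) [d] =
                coeffW K A (ell K A (e :: s)) [] := coeff_mul_letter K A _ d []
            have t2 : coeffW K A (wp K A [d] * ell K A (e :: s)) [d] =
                coeffW K A (ell K A (e :: s)) [] := coeff_letter_mul K A _ d []
            rw [t1, t2, coeff_ell_nil, sub_zero]
          · rw [coeff_mul_letter_ne K A _ _ _ ?hne1,
              coeff_letter_mul_ne K A _ _ _ ?hne2, sub_zero]
            case hne1 =>
              rintro ⟨w', hw'⟩
              rcases snoc_inj (show w' ++ [d] = [] ++ [a] from hw'.symm) with ⟨-, h2⟩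
              exact hd h2
            case hne2 =>
              rintro ⟨w', hw'⟩
              rw [List.cons.injEq] at hw'
              exact hd hw'.1.symm
    · -- u = a :: (m ++ [b])
      have hm1 : (a :: m).length = n := by simpa using hu
      have hm2 : (m ++ [b]).length = n := by simpa using hu
      rw [lam_eq, coeffW_sub]
      rcases eq_nil_or_snoc x with rfl | ⟨y, d, rfl⟩
      · rw [coeff_mul_letter_ne K A _ _ _ (by rintro ⟨w', hw'⟩; simp at hw'),
          coeff_mul_letter_ne K A _ _ _ (by rintro ⟨w', hw'⟩; simp at hw'),
          ell_nil, coeffW_zero, sub_zero]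
      · have h1 : coeffW K A (lam K A (a :: m) * wp K A [b]) (y ++ [d]) =
            if d = b then coeffW K A (ell K A y) (a :: m) else 0 := by
          by_cases hdb : d = b
          · subst hdb
            rw [if_pos rfl, coeff_mul_letter, ih _ hm1]
          · rw [if_neg hdb]
            exact coeff_mul_letter_ne K A _ _ _
              (by rintro ⟨w', hw'⟩; exact hdb (snoc_inj hw').2)
        have h2 : coeffW K A (lam K A (m ++ [b]) * wp K A [a]) (y ++ [d]) =
            if d = a then coeffW K A (ell K A y) (m ++ [b]) else 0 := by
          by_cases hda : d = a
          · subst hda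
            rw [if_pos rfl, coeff_mul_letter, ih _ hm2]
          · rw [if_neg hda]
            exact coeff_mul_letter_ne K A _ _ _
              (by rintro ⟨w', hw'⟩; exact hda (snoc_inj hw').2)
        rw [h1, h2]
        rcases y with _ | ⟨e, s⟩
        · have t1 : coeffW K A (ell K A ([] ++ [d])) (a :: (m ++ [b])) = 0 := by
            rw [show ([] : List A) ++ [d] = [d] from rfl, ell_single, coeff_wp,
              if_neg (by intro hh; have := congrArg List.length hh; simp at this)]
          rw [t1, ell_nil]
          simp [coeffW_zero]
        · rw [ell_snoc, coeffW_sub]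
          have h3 : coeffW K A (ell K A (e :: s) * wp K A [d]) (a :: (m ++ [b])) =
              if d = b then coeffW K A (ell K A (e :: s)) (a :: m) else 0 := by
            by_cases hdb : d = b
            · subst hdb
              rw [if_pos rfl]
              exact coeff_mul_letter K A _ d (a :: m)
            · rw [if_neg hdb]
              refine coeff_mul_letter_ne K A _ _ _ ?_
              rintro ⟨w', hw'⟩
              exact hdb (snoc_inj (show w' ++ [d] = (a :: m) ++ [b] from hw'.symm)).2
          have h4 : coeffW K A (wp K A [d] * ell K A (e :: s)) (a :: (m ++ [b])) =
              if d = a then coeffW K A (ell K A (e :: s)) (m ++ [b]) else 0 := by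
            by_cases hda : d = a
            · subst hda
              rw [if_pos rfl, coeff_letter_mul]
            · rw [if_neg hda]
              refine coeff_letter_mul_ne K A _ _ _ ?_
              rintro ⟨w', hw'⟩
              rw [List.cons.injEq] at hw'
              exact hda hw'.1.symm
          rw [h3, h4]

lemma adj (u x : List A) :
    coeffW K A (lam K A u) x = coeffW K A (ell K A x) u :=
  adj_aux K A u.length u rfl x

lemma ell_mem_freeLie (x : List A) : ell K A x ∈ freeLie K A := by
  induction x using List.reverseRecOn with
  | nil => exact (freeLie K A).zero_mem
  | append_singleton y d ih =>
    rcases y with _ | ⟨a, t⟩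
    · exact LieSubalgebra.subset_lieSpan ⟨d, rfl⟩
    · rw [ell_snoc, ← Ring.lie_def]
      exact (freeLie K A).lie_mem ih (LieSubalgebra.subset_lieSpan ⟨d, rfl⟩)

/-- The span of the left-normed bracketings. -/
def ellSpan : Submodule K (NC K A) := Submodule.span K (Set.range (ell K A))

lemma bracket_letter_mem {p : NC K A} (hp : p ∈ ellSpan K A) (d : A) :
    ⁅p, wp K A [d]⁆ ∈ ellSpan K A := by
  induction hp using Submodule.span_induction with
  | mem q hq =>
    obtain ⟨x, rfl⟩ := hq
    rcases x with _ | ⟨a, t⟩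
    · rw [ell_nil, zero_lie]; exact (ellSpan K A).zero_mem
    · rw [Ring.lie_def, ← ell_snoc]
      exact Submodule.subset_span ⟨_, rfl⟩
  | zero => rw [zero_lie]; exact (ellSpan K A).zero_mem
  | add q r _ _ hq hr => rw [add_lie]; exact (ellSpan K A).add_mem hq hr
  | smul c q _ hq => rw [smul_lie]; exact (ellSpan K A).smul_mem c hq

lemma bracket_ell_mem (x : List A) :
    ∀ p ∈ ellSpan K A, ⁅p, ell K A x⁆ ∈ ellSpan K A := by
  induction x using List.reverseRecOn with
  | nil =>
    intro p _
    rw [ell_nil, lie_zero]; exact (ellSpan K A).zero_mem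
  | append_singleton y d ih =>
    intro p hp
    rcases y with _ | ⟨a, t⟩
    · exact bracket_letter_mem K A hp d
    · rw [ell_snoc, ← Ring.lie_def, leibniz_lie]
      refine (ellSpan K A).add_mem ?_ ?_
      · exact bracket_letter_mem K A (ih p hp) d
      · rw [← lie_skew]
        exact (ellSpan K A).neg_mem (ih _ (bracket_letter_mem K A hp d))

lemma bracket_mem {p q : NC K A} (hp : p ∈ ellSpan K A) (hq : q ∈ ellSpan K A) :
    ⁅p, q⁆ ∈ ellSpan K A := by
  induction hq using Submodule.span_induction with
  | mem r hr =>
    obtain ⟨x, rfl⟩ := hr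
    exact bracket_ell_mem K A x p hp
  | zero => rw [lie_zero]; exact (ellSpan K A).zero_mem
  | add q r _ _ h1 h2 => rw [lie_add]; exact (ellSpan K A).add_mem h1 h2
  | smul c q _ h1 => rw [lie_smul]; exact (ellSpan K A).smul_mem c h1

lemma freeLie_le_ellSpan {P : NC K A} (hP : P ∈ freeLie K A) : P ∈ ellSpan K A := by
  let S' : LieSubalgebra K (NC K A) :=
    { ellSpan K A with
      lie_mem' := fun {x y} hx hy => bracket_mem K A hx hy }
  have hle : freeLie K A ≤ S' := by
    rw [freeLie, LieSubalgebra.lieSpan_le]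
    rintro _ ⟨a, rfl⟩
    exact Submodule.subset_span ⟨[a], rfl⟩
  exact hle hP

end Aux

theorem twin_iff_lam_eq_antitwin_iff_lam_neg
    (K A : Type*) [CommRing K] [Fintype A] (u v : List A) :
    ((∀ P ∈ freeLie K A, coeffW K A P u = coeffW K A P v) ↔ lam K A u = lam K A v) ∧
    ((∀ P ∈ freeLie K A, coeffW K A P u = - coeffW K A P v) ↔ lam K A u = - lam K A v) := by
  constructor
  · constructor
    · intro h
      ext x
      show coeffW K A (lam K A u) (FreeMonoid.toList x) =
        coeffW K A (lam K A v) (FreeMonoid.toList x)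
      rw [adj, adj]
      exact h _ (ell_mem_freeLie K A _)
    · intro hl P hP
      have hPS := freeLie_le_ellSpan K A hP
      clear hP
      induction hPS using Submodule.span_induction with
      | mem q hq =>
        obtain ⟨x, rfl⟩ := hq
        rw [← adj, ← adj, hl]
      | zero => rw [coeffW_zero, coeffW_zero]
      | add q r _ _ h1 h2 => rw [coeffW_add, coeffW_add, h1, h2]
      | smul c q _ h1 => rw [coeffW_smul, coeffW_smul, h1]
  · constructor
    · intro h
      ext x
      rw [MonoidAlgebra.coeff_neg, Finsupp.neg_apply]
      show coeffW K A (lam K A u) (FreeMonoid.toList x) =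
        - coeffW K A (lam K A v) (FreeMonoid.toList x)
      rw [adj, adj]
      exact h _ (ell_mem_freeLie K A _)
    · intro hl P hP
      have hPS := freeLie_le_ellSpan K A hP
      clear hP
      induction hPS using Submodule.span_induction with
      | mem q hq =>
        obtain ⟨x, rfl⟩ := hq
        rw [← adj, ← adj, hl, coeffW_neg]
      | zero => rw [coeffW_zero, coeffW_zero, neg_zero]
      | add q r _ _ h1 h2 => rw [coeffW_add, coeffW_add, h1, h2, neg_add]
      | smul c q _ h1 => rw [coeffW_smul, coeffW_smul, h1, mul_neg]
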